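/- Let C have pullbacks and η : S ⇒ T be a natural transformation between pullback-preserving functors S, T : C → Set. Then γ_η = (id, (⊩_a)) with y ⊩_a x iff y = η_a(x) is a simulation CM^p(C;S) ⇀ CM^p(C;T): each partial function S₁(i,f) is tracked by T₁(i,f). Moreover η ↦ γ_η is faithful: γ_η = γ_θ implies η = θ. -/

import Mathlib

open CategoryTheory Limits

universe w v u

/-- The partial function `S₁(i, f) : S₀(a) ⇀ S₀(b)` determined by a partial
morphism `(i, f) : a ⇀ b`. -/
noncomputable def SPart {C : Type u} [Category.{v} C] (S : C ⥤ Type w) {s a b : C}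
    (i : s ⟶ a) (f : s ⟶ b) : S.obj a →. S.obj b :=
  fun x => ⟨∃ y, S.map i y = x, fun h => S.map f h.choose⟩

/-- The class `S[a,b]` of partial functions of `CM^p(C;S)`. -/
def SPartClass {C : Type u} [Category.{v} C] (S : C ⥤ Type w) (a b : C) :
    Set (S.obj a →. S.obj b) :=
  {p | ∃ (s : C) (i : s ⟶ a) (f : s ⟶ b), Mono i ∧ p = SPart S i f}

/-- `f'` tracks `f` through realizability relations `Rσ`, `Rτ`. -/
def Tracks {α β α' β' : Type w} (Rσ : α' → α → Prop) (Rτ : β' → β → Prop)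
    (f : α →. β) (f' : α' →. β') : Prop :=
  ∀ x y, y ∈ f x → ∀ x', Rσ x' x → ∃ y', y' ∈ f' x' ∧ Rτ y' y

/-- for `C` with pullbacks and a natural transformation
`η : S ⇒ T` between pullback-preserving functors `S, T : C ⥤ Set`, the data
`γ_η = (id, ⊩)` with `y ⊩_a x ↔ y = η_a(x)` is a simulation
`CM^p(C;S) ⇀ CM^p(C;T)`: each `S₁(i,f)` is tracked by `T₁(i,f)`.  Moreover
`η ↦ γ_η` is faithful: `γ_η = γ_θ` implies `η = θ`. -/
theorem gamma_eta_is_simulation_partial {C : Type u} [Category.{v} C] [HasPullbacks C]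
    (S T : C ⥤ Type w)
    [PreservesLimitsOfShape WalkingCospan S] [PreservesLimitsOfShape WalkingCospan T]
    (η : S ⟶ T) :
    -- (Siml1)
    (∀ (a : C) (x : S.obj a), ∃ y : T.obj a, y = η.app a x) ∧
    -- (Siml2): S₁(i,f) is tracked by T₁(i,f), which lies in T[a,b]
    (∀ (a b s : C) (i : s ⟶ a) (f : s ⟶ b), Mono i →
      SPart T i f ∈ SPartClass T a b ∧
      Tracks (fun (y : T.obj a) (x : S.obj a) => y = η.app a x)
             (fun (y : T.obj b) (x : S.obj b) => y = η.app b x)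
             (SPart S i f) (SPart T i f)) ∧
    -- faithfulness
    (∀ θ : S ⟶ T,
      (∀ (a : C) (y : T.obj a) (x : S.obj a), y = η.app a x ↔ y = θ.app a x) →
      η = θ) := by
  refine ⟨fun a x => ⟨η.app a x, rfl⟩, fun a b s i f hi => ?_, fun θ h => ?_⟩
  · have hiT : Mono (T.map i) := preserves_mono_of_preservesLimit T i
    have hinjT : Function.Injective (T.map i) :=
      (CategoryTheory.mono_iff_injective (T.map i)).mp hiT
    refine ⟨⟨s, i, f, hi, rfl⟩, ?_⟩
    intro x y hy x' hx'
    obtain ⟨hdom, hval⟩ := hy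
    have hdom' : ∃ z, T.map i z = x' := by
      refine ⟨η.app s hdom.choose, ?_⟩
      have := FunctorToTypes.naturality η i hdom.choose
      rw [← this, hdom.choose_spec, hx']
    refine ⟨(SPart T i f x').get hdom', ⟨hdom', rfl⟩, ?_⟩
    have hch : hdom'.choose = η.app s hdom.choose := by
      apply hinjT
      rw [hdom'.choose_spec, hx']
      have := FunctorToTypes.naturality η i hdom.choose
      rw [← this, hdom.choose_spec]
    show T.map f hdom'.choose = η.app b y
    rw [hch, ← hval]
    have := FunctorToTypes.naturality η f hdom.choose
    exact this.symm
  · ext a x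
    exact (h a (η.app a x) x).mp rfl
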